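/- For symmetric positive semi-definite n×n real matrices A and B, det(A + B)^{1/n} ≥ det(A)^{1/n} + det(B)^{1/n}. -/

import Mathlib

open Finset Matrix

/-- Superadditivity of the geometric mean, special case: `(∏ (1 + fᵢ))^{1/n} ≥ 1 + (∏ fᵢ)^{1/n}`. -/
lemma geom_superadd_aux {n : ℕ} (hn : 0 < n) (f : Fin n → ℝ) (hf : ∀ i, 0 ≤ f i) :
    1 + (∏ i, f i) ^ ((1 : ℝ) / n) ≤ (∏ i, (1 + f i)) ^ ((1 : ℝ) / n) := by
  have hnR : (0 : ℝ) < n := by exact_mod_cast hn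
  have hpos : ∀ i, (0 : ℝ) < 1 + f i := fun i => by linarith [hf i]
  have hP : (0 : ℝ) < ∏ i, (1 + f i) := Finset.prod_pos fun i _ => hpos i
  set P : ℝ := ∏ i, (1 + f i) with hPdef
  have hw : ∀ i ∈ (Finset.univ : Finset (Fin n)), (0 : ℝ) ≤ 1 / n :=
    fun i _ => by positivity
  have hw' : ∑ _i : Fin n, (1 : ℝ) / n = 1 := by
    rw [Finset.sum_const, Finset.card_univ, Fintype.card_fin, nsmul_eq_mul]
    field_simp
  have h1 : ∏ i, ((1 + f i)⁻¹) ^ ((1 : ℝ) / n) ≤ ∑ i, ((1 : ℝ) / n) * (1 + f i)⁻¹ :=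
    Real.geom_mean_le_arith_mean_weighted _ _ _ hw hw'
      (fun i _ => inv_nonneg.mpr (hpos i).le)
  have h2 : ∏ i, (f i * (1 + f i)⁻¹) ^ ((1 : ℝ) / n) ≤
      ∑ i, ((1 : ℝ) / n) * (f i * (1 + f i)⁻¹) :=
    Real.geom_mean_le_arith_mean_weighted _ _ _ hw hw'
      (fun i _ => mul_nonneg (hf i) (inv_nonneg.mpr (hpos i).le))
  have hsum : (∑ i, ((1 : ℝ) / n) * (1 + f i)⁻¹) +
      ∑ i, ((1 : ℝ) / n) * (f i * (1 + f i)⁻¹) = 1 := by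
    rw [← Finset.sum_add_distrib]
    have : ∀ i : Fin n, ((1 : ℝ) / n) * (1 + f i)⁻¹ + ((1 : ℝ) / n) * (f i * (1 + f i)⁻¹)
        = (1 : ℝ) / n := by
      intro i
      have h := (hpos i).ne'
      field_simp
    rw [Finset.sum_congr rfl fun i _ => this i, hw']
  -- combine
  have hcomb : (∏ i, ((1 + f i)⁻¹) ^ ((1 : ℝ) / n)) +
      (∏ i, (f i * (1 + f i)⁻¹) ^ ((1 : ℝ) / n)) ≤ 1 := by
    calc _ ≤ (∑ i, ((1 : ℝ) / n) * (1 + f i)⁻¹) +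
        ∑ i, ((1 : ℝ) / n) * (f i * (1 + f i)⁻¹) := add_le_add h1 h2
      _ = 1 := hsum
  -- rewrite the products
  have e1 : ∏ i, ((1 + f i)⁻¹) ^ ((1 : ℝ) / n) = (P⁻¹) ^ ((1 : ℝ) / n) := by
    rw [Real.finset_prod_rpow _ _ (fun i _ => inv_nonneg.mpr (hpos i).le), ← Finset.prod_inv_distrib]
  have e2 : ∏ i, (f i * (1 + f i)⁻¹) ^ ((1 : ℝ) / n) =
      ((∏ i, f i) * P⁻¹) ^ ((1 : ℝ) / n) := by
    rw [Real.finset_prod_rpow _ _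
      (fun i _ => mul_nonneg (hf i) (inv_nonneg.mpr (hpos i).le)), Finset.prod_mul_distrib,
      ← Finset.prod_inv_distrib]
  rw [e1, e2] at hcomb
  have hPr : (0 : ℝ) < P ^ ((1 : ℝ) / n) := Real.rpow_pos_of_pos hP _
  have := mul_le_mul_of_nonneg_right hcomb hPr.le
  rw [one_mul, add_mul, ← Real.mul_rpow (inv_nonneg.mpr hP.le) hP.le,
    ← Real.mul_rpow (mul_nonneg (Finset.prod_nonneg fun i _ => hf i)
      (inv_nonneg.mpr hP.le)) hP.le, inv_mul_cancel₀ hP.ne',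
    mul_assoc, inv_mul_cancel₀ hP.ne', mul_one, Real.one_rpow] at this
  exact this

/-- `det (1 + M) = ∏ (1 + μᵢ)` for a real symmetric matrix `M`. -/
lemma det_one_add_of_isHermitian {n : ℕ} {M : Matrix (Fin n) (Fin n) ℝ}
    (hM : M.IsHermitian) :
    (1 + M).det = ∏ i, (1 + hM.eigenvalues i) := by
  have hU : (hM.eigenvectorUnitary : Matrix (Fin n) (Fin n) ℝ) *
      (star hM.eigenvectorUnitary : Matrix (Fin n) (Fin n) ℝ) = 1 :=
    (Matrix.mem_unitaryGroup_iff).mp hM.eigenvectorUnitary.2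
  have key : (1 + M) = (hM.eigenvectorUnitary : Matrix (Fin n) (Fin n) ℝ) *
      (1 + Matrix.diagonal (RCLike.ofReal ∘ hM.eigenvalues)) *
      (star hM.eigenvectorUnitary : Matrix (Fin n) (Fin n) ℝ) := by
    rw [Matrix.mul_add, Matrix.add_mul, Matrix.mul_one, hU, ← Unitary.conjStarAlgAut_apply (S := ℝ), ← hM.spectral_theorem]
  rw [key, Matrix.det_mul, Matrix.det_mul, mul_comm, ← mul_assoc, ← Matrix.det_mul]
  have : (star hM.eigenvectorUnitary : Matrix (Fin n) (Fin n) ℝ) *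
      (hM.eigenvectorUnitary : Matrix (Fin n) (Fin n) ℝ) = 1 :=
    (Matrix.mem_unitaryGroup_iff').mp hM.eigenvectorUnitary.2
  rw [this, Matrix.det_one, one_mul, ← Matrix.diagonal_one, Matrix.diagonal_add,
    Matrix.det_diagonal]
  simp [Pi.add_apply]

/-- A positive semidefinite real matrix with nonzero determinant is positive definite. -/
lemma posDef_of_posSemidef_det_ne_zero {n : ℕ} {A : Matrix (Fin n) (Fin n) ℝ}
    (hA : A.PosSemidef) (h : A.det ≠ 0) : A.PosDef := by
  exact hA.posDef_iff_isUnit.mpr (Matrix.isUnit_iff_isUnit_det A |>.mpr h.isUnit)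

/-- determinant of a PSD matrix is nonnegative -/
lemma psd_det_nonneg {n : ℕ} {A : Matrix (Fin n) (Fin n) ℝ} (hA : A.PosSemidef) :
    0 ≤ A.det := by
  rw [hA.1.det_eq_prod_eigenvalues]
  exact Finset.prod_nonneg fun i _ => by
    simpa using hA.eigenvalues_nonneg i

open scoped MatrixOrder in
lemma minkowski_det_posdef {n : ℕ} (hn : 0 < n)
    (A B : Matrix (Fin n) (Fin n) ℝ) (hA : A.PosDef) (hB : B.PosSemidef) :
    A.det ^ ((1 : ℝ) / n) + B.det ^ ((1 : ℝ) / n) ≤ (A + B).det ^ ((1 : ℝ) / n) := by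
  set S := CFC.sqrt A with hSdef
  have hS : S.PosSemidef := (CFC.sqrt_nonneg A).posSemidef
  have hSS : S * S = A := CFC.sqrt_mul_sqrt_self A hA.posSemidef.nonneg
  have hdetA : 0 < A.det := hA.det_pos
  have hdetS : S.det ≠ 0 := by
    intro h0
    rw [← hSS, Matrix.det_mul, h0, mul_zero] at hdetA
    exact lt_irrefl _ hdetA
  have hSherm : Sᴴ = S := hS.1
  have hSinvH : (S⁻¹)ᴴ = S⁻¹ := by
    rw [Matrix.conjTranspose_nonsing_inv, hSherm]
  set M := S⁻¹ * B * S⁻¹ with hMdef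
  have hMpsd : M.PosSemidef := by
    have := hB.mul_mul_conjTranspose_same (S⁻¹)
    rwa [hSinvH] at this
  have hSi : S * S⁻¹ = 1 := Matrix.mul_nonsing_inv S hdetS.isUnit
  have hiS : S⁻¹ * S = 1 := Matrix.nonsing_inv_mul S hdetS.isUnit
  have hSMS : S * M * S = B := by
    rw [hMdef]
    calc S * (S⁻¹ * B * S⁻¹) * S = (S * S⁻¹) * B * (S⁻¹ * S) := by
          simp only [Matrix.mul_assoc]
      _ = B := by rw [hSi, hiS, Matrix.one_mul, Matrix.mul_one]
  have hAB : A + B = S * (1 + M) * S := by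
    rw [Matrix.mul_add, Matrix.add_mul, Matrix.mul_one, hSS, hSMS]
  set μ := hMpsd.1.eigenvalues with hμdef
  have hμ0 : ∀ i, 0 ≤ μ i := fun i => by simpa using hMpsd.eigenvalues_nonneg i
  have hdetM : M.det = ∏ i, μ i := by
    have := hMpsd.1.det_eq_prod_eigenvalues
    simpa using this
  have hdet1M : (1 + M).det = ∏ i, (1 + μ i) := det_one_add_of_isHermitian hMpsd.1
  have hSS_det : S.det * S.det = A.det := by rw [← Matrix.det_mul, hSS]
  have hdetAB : (A + B).det = A.det * ∏ i, (1 + μ i) := by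
    rw [hAB, Matrix.det_mul, Matrix.det_mul, hdet1M, ← hSS_det]; ring
  have hdetB : B.det = A.det * ∏ i, μ i := by
    rw [← hSMS, Matrix.det_mul, Matrix.det_mul, hdetM, ← hSS_det]; ring
  have hμprod : 0 ≤ ∏ i, μ i := Finset.prod_nonneg fun i _ => hμ0 i
  have hstep := geom_superadd_aux hn μ hμ0
  have hApow : (0 : ℝ) ≤ A.det ^ ((1 : ℝ) / n) := Real.rpow_nonneg hdetA.le _
  calc A.det ^ ((1 : ℝ) / n) + B.det ^ ((1 : ℝ) / n)
      = A.det ^ ((1 : ℝ) / n) * (1 + (∏ i, μ i) ^ ((1 : ℝ) / n)) := by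
        rw [hdetB, Real.mul_rpow hdetA.le hμprod]; ring
    _ ≤ A.det ^ ((1 : ℝ) / n) * (∏ i, (1 + μ i)) ^ ((1 : ℝ) / n) :=
        mul_le_mul_of_nonneg_left hstep hApow
    _ = (A + B).det ^ ((1 : ℝ) / n) := by
        rw [hdetAB, Real.mul_rpow hdetA.le (Finset.prod_nonneg fun i _ => by linarith [hμ0 i])]

/-- Minkowski's determinant inequality: for symmetric positive semi-definite real
`n × n` matrices `A` and `B`, `det(A+B)^{1/n} ≥ det(A)^{1/n} + det(B)^{1/n}`. -/
theorem minkowski_det_inequality {n : ℕ} (hn : 0 < n)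
    (A B : Matrix (Fin n) (Fin n) ℝ) (hA : A.PosSemidef) (hB : B.PosSemidef) :
    A.det ^ ((1 : ℝ) / n) + B.det ^ ((1 : ℝ) / n) ≤ (A + B).det ^ ((1 : ℝ) / n) := by
  have hne : (1 : ℝ) / n ≠ 0 := by
    have : (n : ℝ) ≠ 0 := by exact_mod_cast hn.ne'
    positivity
  by_cases hdA : A.det = 0
  · by_cases hdB : B.det = 0
    · rw [hdA, hdB, Real.zero_rpow hne, add_zero]
      exact Real.rpow_nonneg (psd_det_nonneg (hA.add hB)) _
    · have hBpd := posDef_of_posSemidef_det_ne_zero hB hdB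
      have := minkowski_det_posdef hn B A hBpd hA
      rw [add_comm B A] at this
      rw [hdA, Real.zero_rpow hne, zero_add]
      linarith [Real.rpow_nonneg (psd_det_nonneg hA) ((1 : ℝ) / n),
        Real.rpow_nonneg (psd_det_nonneg hB) ((1 : ℝ) / n)]
  · exact minkowski_det_posdef hn A B (posDef_of_posSemidef_det_ne_zero hA hdA) hB
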